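/- Suppose a sequence {x_k} in ℝ^n satisfies, for some x* and constants C > 0, m ≥ 1, p > 0, the inequality ‖x_{k+1} - x*‖² ≤ ‖x_k - x*‖² - 2 v_k C (f(x_k) - f*)^{1/p} + m² v_k² for all k, where f(x_k) ≥ f* and the stepsizes satisfy v_k > 0, v_k → 0, ∑_k v_k = ∞. Then liminf_{k→∞} f(x_k) = f*. -/

import Mathlib

open Filter

/-- Abstract form of Theorem 3.3(i): diminishing stepsize rule. -/
theorem stmt10 {n : ℕ} (x : ℕ → EuclideanSpace ℝ (Fin n))
    (xstar : EuclideanSpace ℝ (Fin n))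
    (f : EuclideanSpace ℝ (Fin n) → ℝ) (fstar C m p : ℝ)
    (hC : 0 < C) (hm : 1 ≤ m) (hp : 0 < p)
    (hf : ∀ k, fstar ≤ f (x k))
    (v : ℕ → ℝ) (hvpos : ∀ k, 0 < v k)
    (hv0 : Tendsto v atTop (nhds 0))
    (hvsum : Tendsto (fun N => ∑ k ∈ Finset.range N, v k) atTop atTop)
    (hBI : ∀ k, ‖x (k + 1) - xstar‖ ^ 2 ≤ ‖x k - xstar‖ ^ 2
        - 2 * v k * C * (f (x k) - fstar) ^ (1 / p) + m ^ 2 * v k ^ 2) :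
    liminf (fun k => f (x k)) atTop = fstar := by
  have hmpos : (0:ℝ) < m := lt_of_lt_of_le one_pos hm
  -- Key claim: for every δ > 0, frequently f (x k) < fstar + δ
  have key : ∀ δ : ℝ, 0 < δ → ∃ᶠ k in atTop, f (x k) < fstar + δ := by
    intro δ hδ
    by_contra hcon
    rw [Filter.not_frequently] at hcon
    simp only [not_lt] at hcon
    -- hcon : ∀ᶠ k, fstar + δ ≤ f (x k)
    set a := δ ^ (1/p) with ha
    have hapos : 0 < a := Real.rpow_pos_of_pos hδ _
    have hεpos : (0:ℝ) < C * a / m ^ 2 := by positivity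
    have hvsmall : ∀ᶠ k in atTop, v k < C * a / m ^ 2 :=
      hv0.eventually_lt_const hεpos
    obtain ⟨K, hK⟩ := Filter.eventually_atTop.mp (hcon.and hvsmall)
    -- step inequality for k ≥ K
    have step : ∀ k, K ≤ k →
        ‖x (k + 1) - xstar‖ ^ 2 ≤ ‖x k - xstar‖ ^ 2 - C * a * v k := by
      intro k hk
      obtain ⟨h1, h2⟩ := hK k hk
      have harpow : a ≤ (f (x k) - fstar) ^ (1/p) := by
        apply Real.rpow_le_rpow hδ.le (by linarith) (by positivity)
      have hv := hvpos k
      have hBIk := hBI k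
      have hmul : m ^ 2 * v k ^ 2 ≤ C * a * v k := by
        rw [lt_div_iff₀ (by positivity : (0:ℝ) < m ^ 2)] at h2
        nlinarith
      have hmul2 := mul_le_mul_of_nonneg_left harpow
        (by positivity : (0:ℝ) ≤ 2 * v k * C)
      linarith
    -- telescoping
    have tele : ∀ N : ℕ, ‖x (K + N) - xstar‖ ^ 2 ≤
        ‖x K - xstar‖ ^ 2 - C * a * ∑ i ∈ Finset.range N, v (K + i) := by
      intro N
      induction N with
      | zero => simp
      | succ N ih =>
        have := step (K + N) (Nat.le_add_right _ _)
        rw [Finset.sum_range_succ]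
        calc ‖x (K + (N + 1)) - xstar‖ ^ 2 = ‖x (K + N + 1) - xstar‖ ^ 2 := by
              ring_nf
          _ ≤ ‖x (K + N) - xstar‖ ^ 2 - C * a * v (K + N) := this
          _ ≤ ‖x K - xstar‖ ^ 2 - C * a * ∑ i ∈ Finset.range N, v (K + i)
                - C * a * v (K + N) := by linarith
          _ = ‖x K - xstar‖ ^ 2
                - C * a * (∑ i ∈ Finset.range N, v (K + i) + v (K + N)) := by ring
    -- divergence of tail sums
    have htail : Tendsto (fun N => ∑ i ∈ Finset.range N, v (K + i)) atTop atTop := by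
      have h1 : Tendsto (fun N => ∑ k ∈ Finset.range (K + N), v k) atTop atTop := by
        have := hvsum.comp (tendsto_add_atTop_nat K)
        simpa [Function.comp_def, Nat.add_comm] using this
      have h2 : ∀ N, ∑ i ∈ Finset.range N, v (K + i)
          = ∑ k ∈ Finset.range (K + N), v k - ∑ k ∈ Finset.range K, v k := by
        intro N
        rw [Finset.sum_range_add]
        ring
      simp only [h2]
      simpa [sub_eq_add_neg] using
        tendsto_atTop_add_const_right atTop (-(∑ k ∈ Finset.range K, v k)) h1
    obtain ⟨N, hN⟩ := (htail.eventually_gt_atTop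
      (‖x K - xstar‖ ^ 2 / (C * a))).exists
    have hCa : (0:ℝ) < C * a := mul_pos hC hapos
    have hlt : ‖x K - xstar‖ ^ 2 < C * a * ∑ i ∈ Finset.range N, v (K + i) := by
      rw [div_lt_iff₀ hCa] at hN
      linarith [hN]
    have := tele N
    nlinarith [sq_nonneg ‖x (K + N) - xstar‖]
  -- conclude
  have hbdd : IsBoundedUnder (· ≥ ·) atTop (fun k => f (x k)) :=
    isBoundedUnder_of ⟨fstar, hf⟩
  have hcob : IsCoboundedUnder (· ≥ ·) atTop (fun k => f (x k)) := by
    refine ⟨fstar + 1, fun b hb => ?_⟩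
    rw [Filter.eventually_map] at hb
    obtain ⟨k, hk1, hk2⟩ := (hb.and_frequently (key 1 one_pos)).exists
    simp only [ge_iff_le] at hk1 ⊢
    linarith
  have hle : liminf (fun k => f (x k)) atTop ≤ fstar := by
    refine le_of_forall_pos_le_add fun δ hδ => ?_
    exact liminf_le_of_frequently_le ((key δ hδ).mono fun k hk => hk.le) hbdd
  have hge : fstar ≤ liminf (fun k => f (x k)) atTop :=
    le_liminf_of_le hcob (Filter.Eventually.of_forall hf)
  linarith
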